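/- The class of 2-roaches is closed under generated subframes: if F = (W, ≤) is a 2-roach and w ∈ W, then the subframe on ↑w is a 2-roach. -/

import Mathlib

/-- `m` is a maximal point: `↑m = {m}`. -/
def IsMaxPt {W : Type*} (le : W → W → Prop) (m : W) : Prop :=
  ∀ x, le m x → x = m

/-- The depth of `w` is at most `n`: every strictly ascending chain (each step goes up and
not back down, i.e. moves to a strictly higher cluster) starting at `w` has length at most
`n`. -/
def DepthLE {W : Type*} (le : W → W → Prop) (w : W) (n : ℕ) : Prop :=
  ∀ l : List W, l.head? = some w → l.Chain' (fun a b => le a b ∧ ¬ le b a) → l.length ≤ n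

/-- `s` is a splitting point witnessing the `n`-roach condition: `s` has depth at most `n`,
the up-set `↑s` is partially ordered (the restriction of `le` is antisymmetric on it), and
for every `w` there is `t_w ∈ ↑s` with `↑w ∩ ↑s = ↑t_w`. -/
def IsSplittingPoint {W : Type*} (le : W → W → Prop) (n : ℕ) (s : W) : Prop :=
  DepthLE le s n ∧
  (∀ a b, le s a → le s b → le a b → le b a → a = b) ∧
  (∀ w, ∃ t, le s t ∧ ∀ x, (le w x ∧ le s x) ↔ le t x)

/-- An `n`-roach: a frame possessing a splitting point of depth at most `n`. -/
def IsNRoach {W : Type*} (le : W → W → Prop) (n : ℕ) : Prop :=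
  ∃ s, IsSplittingPoint le n s

/-- The class of 2-roaches is closed under generated subframes: for any `w`, the subframe
on `↑w` (with the restricted order) is again a 2-roach. -/
theorem stmt_15 {W : Type*} [Fintype W] (le : W → W → Prop)
    (hrefl : ∀ w, le w w)
    (htrans : ∀ a b c, le a b → le b c → le a c)
    (hroot : ∃ r, ∀ w, le r w)
    (hs41 : ∀ w, ∃ m, le w m ∧ IsMaxPt le m)
    (h2 : IsNRoach le 2) (w : W) :
    IsNRoach (fun a b : {x // le w x} => le a.1 b.1) 2 := by
  obtain ⟨s, hdep, hanti, hsplit⟩ := h2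
  obtain ⟨t, hst, hts⟩ := hsplit w
  have hwt : le w t ∧ le s t := (hts t).mpr (hrefl t)
  have hdt : DepthLE le t 2 := by
    intro l hl hch
    cases l with
    | nil => simp at hl
    | cons a rest =>
      have ha : a = t := by simpa using hl
      subst a
      by_cases hts' : le t s
      · cases rest with
        | nil => simp
        | cons b rs =>
          unfold List.Chain' at hch; rw [List.isChain_cons_cons] at hch
          have h1 := hdep (s :: b :: rs) rfl (by
            unfold List.Chain'; rw [List.isChain_cons_cons]
            exact ⟨⟨htrans s t b hst hch.1.1,
              fun hbs => hch.1.2 (htrans b s t hbs hst)⟩, hch.2⟩)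
          simpa using h1
      · have h1 := hdep (s :: t :: rest) rfl (by
          unfold List.Chain'; rw [List.isChain_cons_cons]; exact ⟨⟨hst, hts'⟩, hch⟩)
        simp only [List.length_cons] at h1 ⊢
        omega
  refine ⟨⟨t, hwt.1⟩, ?_, ?_, ?_⟩
  · intro l hhead hchain
    have h1 := hdt (l.map Subtype.val) ?_ ?_
    · simpa using h1
    · cases l with
      | nil => simp at hhead
      | cons a rest =>
        simp only [List.head?_cons, Option.some.injEq] at hhead ⊢
        simp [hhead]
    · unfold List.Chain'; rw [List.isChain_map]; exact hchain
  · rintro ⟨a, ha⟩ ⟨b, hb⟩ h1 h2 h3 h4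
    exact Subtype.ext (hanti a b (htrans s t a hwt.2 h1) (htrans s t b hwt.2 h2) h3 h4)
  · rintro ⟨v, hv⟩
    obtain ⟨u, hsu, hu⟩ := hsplit v
    have hvu : le v u ∧ le s u := (hu u).mpr (hrefl u)
    have hwu : le w u := htrans w v u hv hvu.1
    refine ⟨⟨u, hwu⟩, ?_, ?_⟩
    · exact (hts u).mp ⟨hwu, hvu.2⟩
    · rintro ⟨x, hx⟩
      constructor
      · rintro ⟨h1, h2⟩
        exact (hu x).mp ⟨h1, ((hts x).mpr h2).2⟩
      · intro h
        have hh := (hu x).mpr h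
        exact ⟨hh.1, (hts x).mp ⟨hx, hh.2⟩⟩
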